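/- Let T > 0, n ≥ 1, λ_i > 0 for i ≤ n. Let σ_i : [0,T] → (0,∞) be continuously differentiable functions, and let r_i : [0,T]² → ℝ be symmetric functions with r_i(t,t) = 1, such that for constants D_i > 0 and α_i ∈ (0,2), lim (1 − r_i(s,t))/|t−s|^{α_i} = D_i as min(s,t) → T with s ≠ t (i.e., for every ε > 0 there is δ > 0 such that this ratio is within ε of D_i whenever s,t ∈ (T−δ,T], s ≠ t). Set α = min_{i≤n} α_i, σ_X(t) = (∑_{i=1}^n λ_i² σ_i(t)²)^{1/2}, R(s,t) = ∑_{i=1}^n λ_i² σ_i(s) σ_i(t) r_i(s,t), and G̃ = ∑_{i: α_i = α} λ_i² D_i σ_i(T)². Then lim (1 − R(s,t)/(σ_X(s)σ_X(t)))/|t−s|^{α} = G̃/σ_X(T)² as min(s,t) → T with s ≠ t. -/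

import Mathlib

open Filter Set
open scoped Classical
open Topology

noncomputable def lfil (T : ℝ) : Filter (ℝ × ℝ) :=
  ((𝓝[Set.Iic T] T) ×ˢ (𝓝[Set.Iic T] T)) ⊓ 𝓟 {p : ℝ × ℝ | p.1 ≠ p.2}

theorem eps_iff (T : ℝ) (hT : 0 < T) (f : ℝ × ℝ → ℝ) (L : ℝ) :
    Tendsto f (lfil T) (𝓝 L) ↔
      ∀ ε > 0, ∃ δ > 0, ∀ s t : ℝ, s ∈ Ioc (T - δ) T → t ∈ Ioc (T - δ) T → s ≠ t →
        |f (s, t) - L| ≤ ε := by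
  constructor
  · intro h ε hε
    have h1 : {x : ℝ | dist x L < ε} ∈ 𝓝 L := Metric.ball_mem_nhds _ hε
    have h2 := h h1
    rw [lfil] at h2
    rw [Filter.mem_map, Filter.mem_inf_principal, Filter.mem_prod_iff] at h2
    obtain ⟨V, hV, W, hW, hVW⟩ := h2
    obtain ⟨l1, hl1, hl1s⟩ := mem_nhdsLE_iff_exists_Ioc_subset.1 hV
    obtain ⟨l2, hl2, hl2s⟩ := mem_nhdsLE_iff_exists_Ioc_subset.1 hW
    simp only [Set.mem_Iio] at hl1 hl2
    refine ⟨min (T - l1) (T - l2), by simp [sub_pos.2, hl1, hl2], ?_⟩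
    intro s t hs ht hst
    have h1s : l1 < s := lt_of_le_of_lt (by have := min_le_left (T-l1) (T-l2); linarith) hs.1
    have h2t : l2 < t := lt_of_le_of_lt (by have := min_le_right (T-l1) (T-l2); linarith) ht.1
    have hmem : (s, t) ∈ V ×ˢ W := ⟨hl1s ⟨h1s, hs.2⟩, hl2s ⟨h2t, ht.2⟩⟩
    have := hVW hmem hst
    simp only [Set.mem_preimage, Set.mem_setOf_eq, Real.dist_eq] at this
    exact this.le
  · intro h
    rw [Metric.tendsto_nhds]
    intro ε hε
    obtain ⟨δ, hδ, hδ'⟩ := h (ε/2) (by linarith)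
    have hmem : (Ioc (T - δ) T ×ˢ Ioc (T - δ) T) ∩ {p : ℝ × ℝ | p.1 ≠ p.2} ∈ lfil T := by
      refine Filter.inter_mem (Filter.mem_inf_of_left ?_) (Filter.mem_inf_of_right ?_)
      · exact Filter.prod_mem_prod (Ioc_mem_nhdsLE (by linarith))
          (Ioc_mem_nhdsLE (by linarith))
      · exact Filter.mem_principal_self _
    filter_upwards [hmem] with p hp
    obtain ⟨⟨hp1, hp2⟩, hp3⟩ := hp
    have := hδ' p.1 p.2 hp1 hp2 hp3
    rw [Real.dist_eq]
    calc |f p - L| = |f (p.1, p.2) - L| := by rw [Prod.mk.eta]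
    _ ≤ ε/2 := this
    _ < ε := by linarith

theorem lagrange {n : ℕ} (a b : Fin n → ℝ) :
    (∑ i, a i ^ 2) * (∑ i, b i ^ 2) - (∑ i, a i * b i) ^ 2
      = (∑ i, ∑ j, (a i * b j - a j * b i) ^ 2) / 2 := by
  have e1 : ∑ i, ∑ j, (a i * b j - a j * b i) ^ 2
      = (∑ i, ∑ j, a i ^ 2 * b j ^ 2) + (∑ i, ∑ j, a j ^ 2 * b i ^ 2)
        - 2 * ∑ i, ∑ j, (a i * b i) * (a j * b j) := by
    rw [Finset.mul_sum, ← Finset.sum_add_distrib, ← Finset.sum_sub_distrib]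
    refine Finset.sum_congr rfl fun i _ => ?_
    rw [Finset.mul_sum, ← Finset.sum_add_distrib, ← Finset.sum_sub_distrib]
    exact Finset.sum_congr rfl fun j _ => by ring
  have e2 : (∑ i, ∑ j, a j ^ 2 * b i ^ 2) = ∑ i, ∑ j, a i ^ 2 * b j ^ 2 := Finset.sum_comm
  have e3 : (∑ i, a i ^ 2) * (∑ i, b i ^ 2) = ∑ i, ∑ j, a i ^ 2 * b j ^ 2 :=
    Finset.sum_mul_sum _ _ _ _
  have e4 : (∑ i, a i * b i) ^ 2 = ∑ i, ∑ j, (a i * b i) * (a j * b j) := by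
    rw [sq]; exact Finset.sum_mul_sum _ _ _ _
  rw [e1, e2, e3, e4]; ring

/-- first-order expansion of the aggregate correlation near `T`. With
`R(s,t) = ∑ λ_i² σ_i(s) σ_i(t) r_i(s,t)` and `σ_X(t) = (∑ λ_i² σ_i(t)²)^{1/2}`,
if `1 - r_i(s,t) ∼ D_i |t-s|^{α_i}` as `min(s,t) → T`, then
`1 - R(s,t)/(σ_X(s)σ_X(t)) ∼ (G̃/σ_X(T)²) |t-s|^α` as `min(s,t) → T`, where
`α = min_i α_i` and `G̃ = ∑_{i : α_i = α} λ_i² D_i σ_i(T)²`. -/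
theorem stmt10 (T : ℝ) (hT : 0 < T) (n : ℕ) [NeZero n]
    (lam D alpha : Fin n → ℝ) (sig : Fin n → ℝ → ℝ) (r : Fin n → ℝ → ℝ → ℝ)
    (hlam : ∀ i, 0 < lam i) (hD : ∀ i, 0 < D i)
    (halpha : ∀ i, alpha i ∈ Set.Ioo (0:ℝ) 2)
    (hsig_pos : ∀ i, ∀ t ∈ Set.Icc (0:ℝ) T, 0 < sig i t)
    (hsig_smooth : ∀ i, ContDiffOn ℝ 1 (sig i) (Set.Icc (0:ℝ) T))
    (hr_symm : ∀ i s t, r i s t = r i t s)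
    (hr_diag : ∀ i t, r i t t = 1)
    (hr_lim : ∀ i, ∀ ε > 0, ∃ δ > 0, ∀ s t : ℝ,
      s ∈ Set.Ioc (T - δ) T → t ∈ Set.Ioc (T - δ) T → s ≠ t →
      |(1 - r i s t) / |t - s| ^ alpha i - D i| ≤ ε) :
    ∀ ε > 0, ∃ δ > 0, ∀ s t : ℝ,
      s ∈ Set.Ioc (T - δ) T → t ∈ Set.Ioc (T - δ) T → s ≠ t →
      |(1 - (∑ i, lam i ^ 2 * sig i s * sig i t * r i s t) /
            (Real.sqrt (∑ i, lam i ^ 2 * sig i s ^ 2) *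
              Real.sqrt (∑ i, lam i ^ 2 * sig i t ^ 2))) / |t - s| ^ (⨅ j, alpha j)
          - (∑ i ∈ Finset.univ.filter fun i => alpha i = ⨅ j, alpha j,
              lam i ^ 2 * D i * sig i T ^ 2) / (∑ i, lam i ^ 2 * sig i T ^ 2)| ≤ ε := by
  have hn : Nonempty (Fin n) := ⟨⟨0, Nat.pos_of_ne_zero (NeZero.ne n)⟩⟩
  classical
  set α := ⨅ j, alpha j with hαdef
  obtain ⟨i0, hi0⟩ : ∃ i, alpha i = α := exists_eq_ciInf_of_finite
  have hα_le : ∀ i, α ≤ alpha i := fun i => ciInf_le (Set.finite_range alpha).bddBelow i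
  have hα_pos : 0 < α := hi0 ▸ (halpha i0).1
  have hα_lt2 : α < 2 := hi0 ▸ (halpha i0).2
  have hTmem : T ∈ Icc (0:ℝ) T := ⟨hT.le, le_refl T⟩
  have hsig_cont : ∀ i, ContinuousOn (sig i) (Icc 0 T) := fun i => (hsig_smooth i).continuousOn
  -- basic tendsto facts
  have hIic : 𝓝[Iic T] T ≤ 𝓝[Icc (0:ℝ) T] T := (nhdsWithin_Icc_eq_nhdsLE hT).ge
  have hfst : Tendsto (fun p : ℝ × ℝ => p.1) (lfil T) (𝓝[Iic T] T) :=
    tendsto_fst.mono_left inf_le_left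
  have hsnd : Tendsto (fun p : ℝ × ℝ => p.2) (lfil T) (𝓝[Iic T] T) :=
    tendsto_snd.mono_left inf_le_left
  have hsigT : ∀ i, Tendsto (sig i) (𝓝[Iic T] T) (𝓝 (sig i T)) :=
    fun i => ((hsig_cont i) T hTmem).mono_left hIic
  have hsig1 : ∀ i, Tendsto (fun p : ℝ × ℝ => sig i p.1) (lfil T) (𝓝 (sig i T)) :=
    fun i => (hsigT i).comp hfst
  have hsig2 : ∀ i, Tendsto (fun p : ℝ × ℝ => sig i p.2) (lfil T) (𝓝 (sig i T)) :=
    fun i => (hsigT i).comp hsnd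
  have hfstN : Tendsto (fun p : ℝ × ℝ => p.1) (lfil T) (𝓝 T) := hfst.mono_right nhdsWithin_le_nhds
  have hsndN : Tendsto (fun p : ℝ × ℝ => p.2) (lfil T) (𝓝 T) := hsnd.mono_right nhdsWithin_le_nhds
  have hw : Tendsto (fun p : ℝ × ℝ => |p.2 - p.1|) (lfil T) (𝓝 0) := by
    have := (hsndN.sub hfstN).abs
    simpa using this
  -- constants
  have hMex : ∀ i, ∃ Mi, 0 ≤ Mi ∧ ∀ x ∈ Icc (0:ℝ) T, |lam i * sig i x| ≤ Mi := by
    intro i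
    obtain ⟨Mi, hMi⟩ := isCompact_Icc.exists_bound_of_continuousOn
      (continuousOn_const.mul (hsig_cont i))
    refine ⟨max Mi 0, le_max_right _ _, fun x hx => ?_⟩
    exact le_trans (by simpa only [Real.norm_eq_abs, Pi.mul_apply] using hMi x hx) (le_max_left _ _)
  choose Mf hMf0 hMf using hMex
  have hKex : ∀ i, ∃ Ki, 0 ≤ Ki ∧ ∀ x ∈ Icc (0:ℝ) T, ∀ y ∈ Icc (0:ℝ) T,
      |lam i * sig i y - lam i * sig i x| ≤ Ki * |y - x| := by
    intro i
    have hdiff : DifferentiableOn ℝ (sig i) (Icc 0 T) := (hsig_smooth i).differentiableOn one_ne_zero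
    have hcd : ContinuousOn (derivWithin (sig i) (Icc 0 T)) (Icc 0 T) :=
      (hsig_smooth i).continuousOn_derivWithin (uniqueDiffOn_Icc hT) le_rfl
    obtain ⟨Ki, hKi⟩ := isCompact_Icc.exists_bound_of_continuousOn hcd
    have hKi0 : 0 ≤ Ki := le_trans (norm_nonneg _) (hKi T hTmem)
    refine ⟨lam i * Ki, mul_nonneg (hlam i).le hKi0, fun x hx y hy => ?_⟩
    have hmv : ‖sig i y - sig i x‖ ≤ Ki * ‖y - x‖ :=
      Convex.norm_image_sub_le_of_norm_derivWithin_le hdiff hKi (convex_Icc 0 T) hx hy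
    have : |lam i * sig i y - lam i * sig i x| = lam i * |sig i y - sig i x| := by
      rw [← mul_sub, abs_mul, abs_of_pos (hlam i)]
    rw [this, mul_assoc]
    exact mul_le_mul_of_nonneg_left (by simpa [Real.norm_eq_abs] using hmv) (hlam i).le
  choose Kf hKf0 hKf using hKex
  set M := Finset.univ.sup' Finset.univ_nonempty Mf with hMdef
  set K := Finset.univ.sup' Finset.univ_nonempty Kf with hKdef
  have hM : ∀ i, ∀ x ∈ Icc (0:ℝ) T, |lam i * sig i x| ≤ M :=
    fun i x hx => (hMf i x hx).trans (Finset.le_sup' Mf (Finset.mem_univ i))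
  have hK : ∀ i, ∀ x ∈ Icc (0:ℝ) T, ∀ y ∈ Icc (0:ℝ) T,
      |lam i * sig i y - lam i * sig i x| ≤ K * |y - x| := by
    intro i x hx y hy
    exact (hKf i x hx y hy).trans
      (mul_le_mul_of_nonneg_right (Finset.le_sup' Kf (Finset.mem_univ i)) (abs_nonneg _))
  have hM0 : 0 ≤ M := (hMf0 i0).trans (Finset.le_sup' Mf (Finset.mem_univ i0))
  have hK0 : 0 ≤ K := (hKf0 i0).trans (Finset.le_sup' Kf (Finset.mem_univ i0))
  -- lower bound on sqrt of A
  obtain ⟨x0, hx0, hminOn⟩ := isCompact_Icc.exists_isMinOn (Set.nonempty_Icc.mpr hT.le)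
    (hsig_cont i0)
  set m := sig i0 x0 with hmdef
  have hm_pos : 0 < m := hsig_pos i0 x0 hx0
  set c := lam i0 * m with hcdef
  have hc_pos : 0 < c := mul_pos (hlam i0) hm_pos
  have hA_pos : ∀ x ∈ Icc (0:ℝ) T, 0 < ∑ i, lam i ^ 2 * sig i x ^ 2 := by
    intro x hx
    exact Finset.sum_pos (fun i _ =>
      mul_pos (pow_pos (hlam i) 2) (pow_pos (hsig_pos i x hx) 2)) ⟨i0, Finset.mem_univ i0⟩
  have hA_lb : ∀ x ∈ Icc (0:ℝ) T, c ≤ Real.sqrt (∑ i, lam i ^ 2 * sig i x ^ 2) := by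
    intro x hx
    have hmx : m ≤ sig i0 x := hminOn hx
    have h1 : c ^ 2 ≤ lam i0 ^ 2 * sig i0 x ^ 2 := by
      rw [hcdef, mul_pow]
      have hsq : m ^ 2 ≤ sig i0 x ^ 2 := by nlinarith
      nlinarith [mul_nonneg (sq_nonneg (lam i0)) (sub_nonneg.2 hsq)]
    have h2 : lam i0 ^ 2 * sig i0 x ^ 2 ≤ ∑ i, lam i ^ 2 * sig i x ^ 2 :=
      Finset.single_le_sum (f := fun i => lam i ^ 2 * sig i x ^ 2) (fun i _ =>
        mul_nonneg (sq_nonneg _) (sq_nonneg _)) (Finset.mem_univ i0)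
    calc c = Real.sqrt (c ^ 2) := (Real.sqrt_sq hc_pos.le).symm
    _ ≤ Real.sqrt (∑ i, lam i ^ 2 * sig i x ^ 2) := Real.sqrt_le_sqrt (h1.trans h2)
  -- denominator tendsto
  have hA1 : Tendsto (fun p : ℝ × ℝ => ∑ i, lam i ^ 2 * sig i p.1 ^ 2) (lfil T)
      (𝓝 (∑ i, lam i ^ 2 * sig i T ^ 2)) :=
    tendsto_finset_sum _ fun i _ => tendsto_const_nhds.mul ((hsig1 i).pow 2)
  have hA2 : Tendsto (fun p : ℝ × ℝ => ∑ i, lam i ^ 2 * sig i p.2 ^ 2) (lfil T)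
      (𝓝 (∑ i, lam i ^ 2 * sig i T ^ 2)) :=
    tendsto_finset_sum _ fun i _ => tendsto_const_nhds.mul ((hsig2 i).pow 2)
  have hsqrt1 : Tendsto (fun p : ℝ × ℝ => Real.sqrt (∑ i, lam i ^ 2 * sig i p.1 ^ 2)) (lfil T)
      (𝓝 (Real.sqrt (∑ i, lam i ^ 2 * sig i T ^ 2))) :=
    (Real.continuous_sqrt.tendsto _).comp hA1
  have hsqrt2 : Tendsto (fun p : ℝ × ℝ => Real.sqrt (∑ i, lam i ^ 2 * sig i p.2 ^ 2)) (lfil T)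
      (𝓝 (Real.sqrt (∑ i, lam i ^ 2 * sig i T ^ 2))) :=
    (Real.continuous_sqrt.tendsto _).comp hA2
  have hden : Tendsto (fun p : ℝ × ℝ =>
      Real.sqrt (∑ i, lam i ^ 2 * sig i p.1 ^ 2) * Real.sqrt (∑ i, lam i ^ 2 * sig i p.2 ^ 2))
      (lfil T) (𝓝 (∑ i, lam i ^ 2 * sig i T ^ 2)) := by
    have := hsqrt1.mul hsqrt2
    rwa [Real.mul_self_sqrt (hA_pos T hTmem).le] at this
  -- correlation ratio tendsto
  have htr : ∀ i, Tendsto (fun p : ℝ × ℝ => (1 - r i p.1 p.2) / |p.2 - p.1| ^ alpha i) (lfil T)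
      (𝓝 (D i)) := fun i => (eps_iff T hT _ _).mpr (hr_lim i)
  -- each Q-term tendsto
  have hterm : ∀ i, Tendsto (fun p : ℝ × ℝ =>
      lam i ^ 2 * sig i p.1 * sig i p.2 * ((1 - r i p.1 p.2) / |p.2 - p.1| ^ alpha i)
        * |p.2 - p.1| ^ (alpha i - α)) (lfil T)
      (𝓝 (if alpha i = α then lam i ^ 2 * D i * sig i T ^ 2 else 0)) := by
    intro i
    have t1 : Tendsto (fun p : ℝ × ℝ => lam i ^ 2 * sig i p.1 * sig i p.2) (lfil T)
        (𝓝 (lam i ^ 2 * sig i T * sig i T)) :=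
      (tendsto_const_nhds.mul (hsig1 i)).mul (hsig2 i)
    have t3 : Tendsto (fun p : ℝ × ℝ => |p.2 - p.1| ^ (alpha i - α)) (lfil T)
        (𝓝 (if alpha i = α then 1 else 0)) := by
      by_cases h : alpha i = α
      · simp only [h, sub_self, Real.rpow_zero, if_pos rfl]
        exact tendsto_const_nhds
      · have hgt : 0 < alpha i - α := sub_pos.2 ((hα_le i).lt_of_ne (Ne.symm h))
        have hc2 : Tendsto (fun x : ℝ => x ^ (alpha i - α)) (𝓝 0)
            (𝓝 ((0:ℝ) ^ (alpha i - α))) :=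
          (Real.continuousAt_rpow_const 0 _ (Or.inr hgt.le)).tendsto
        rw [Real.zero_rpow hgt.ne'] at hc2
        simpa [h, Function.comp_def] using hc2.comp hw
    have hval : (lam i ^ 2 * sig i T * sig i T * D i) * (if alpha i = α then (1:ℝ) else 0)
        = (if alpha i = α then lam i ^ 2 * D i * sig i T ^ 2 else 0) := by
      by_cases h : alpha i = α <;> simp [h] <;> ring
    rw [← hval]
    exact (t1.mul (htr i)).mul t3
  have hQ : Tendsto (fun p : ℝ × ℝ => ∑ i,
      lam i ^ 2 * sig i p.1 * sig i p.2 * ((1 - r i p.1 p.2) / |p.2 - p.1| ^ alpha i)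
        * |p.2 - p.1| ^ (alpha i - α)) (lfil T)
      (𝓝 (∑ i, if alpha i = α then lam i ^ 2 * D i * sig i T ^ 2 else 0)) :=
    tendsto_finset_sum _ fun i _ => hterm i
  -- eventual good set
  have hev : ∀ᶠ p : ℝ × ℝ in lfil T, (p.1 ∈ Ioc (0:ℝ) T ∧ p.2 ∈ Ioc (0:ℝ) T) ∧ p.1 ≠ p.2 := by
    have h1 : Ioc (0:ℝ) T ×ˢ Ioc (0:ℝ) T ∈ (𝓝[Iic T] T) ×ˢ (𝓝[Iic T] T) :=
      Filter.prod_mem_prod (Ioc_mem_nhdsLE hT) (Ioc_mem_nhdsLE hT)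
    have h2 : ∀ᶠ p : ℝ × ℝ in lfil T, p.1 ∈ Ioc (0:ℝ) T ∧ p.2 ∈ Ioc (0:ℝ) T :=
      Filter.mem_inf_of_left h1
    have h3 : ∀ᶠ p : ℝ × ℝ in lfil T, p.1 ≠ p.2 :=
      Filter.mem_inf_of_right (Filter.mem_principal_self _)
    exact h2.and h3
  -- pointwise bounds for the Cauchy-Schwarz defect term
  have hPpt : ∀ p : ℝ × ℝ, ((p.1 ∈ Ioc (0:ℝ) T ∧ p.2 ∈ Ioc (0:ℝ) T) ∧ p.1 ≠ p.2) →
      0 ≤ Real.sqrt (∑ i, lam i ^ 2 * sig i p.1 ^ 2) * Real.sqrt (∑ i, lam i ^ 2 * sig i p.2 ^ 2)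
          - ∑ i, (lam i * sig i p.1) * (lam i * sig i p.2) ∧
      Real.sqrt (∑ i, lam i ^ 2 * sig i p.1 ^ 2) * Real.sqrt (∑ i, lam i ^ 2 * sig i p.2 ^ 2)
          - ∑ i, (lam i * sig i p.1) * (lam i * sig i p.2)
        ≤ (2 * (n:ℝ) * (n:ℝ) * M ^ 2 * K ^ 2 / (c * c)) * |p.2 - p.1| ^ 2 := by
    rintro p ⟨⟨hp1, hp2⟩, hp3⟩
    have hsIcc : p.1 ∈ Icc (0:ℝ) T := ⟨hp1.1.le, hp1.2⟩
    have htIcc : p.2 ∈ Icc (0:ℝ) T := ⟨hp2.1.le, hp2.2⟩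
    set a : Fin n → ℝ := fun i => lam i * sig i p.1 with hadef
    set b : Fin n → ℝ := fun i => lam i * sig i p.2 with hbdef
    set w : ℝ := |p.2 - p.1| with hwdef
    have hw0 : 0 ≤ w := abs_nonneg _
    have hea : (∑ i, lam i ^ 2 * sig i p.1 ^ 2) = ∑ i, a i ^ 2 :=
      Finset.sum_congr rfl fun i _ => (mul_pow _ _ 2).symm
    have heb : (∑ i, lam i ^ 2 * sig i p.2 ^ 2) = ∑ i, b i ^ 2 :=
      Finset.sum_congr rfl fun i _ => (mul_pow _ _ 2).symm
    have ha2 : (0:ℝ) ≤ ∑ i, a i ^ 2 := Finset.sum_nonneg fun i _ => sq_nonneg _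
    have hb2 : (0:ℝ) ≤ ∑ i, b i ^ 2 := Finset.sum_nonneg fun i _ => sq_nonneg _
    have hC0 : (0:ℝ) ≤ ∑ i, a i * b i := Finset.sum_nonneg fun i _ =>
      mul_nonneg (mul_nonneg (hlam i).le (hsig_pos i _ hsIcc).le)
        (mul_nonneg (hlam i).le (hsig_pos i _ htIcc).le)
    have hcs : (∑ i, a i * b i) ^ 2 ≤ (∑ i, a i ^ 2) * ∑ i, b i ^ 2 :=
      Finset.sum_mul_sq_le_sq_mul_sq Finset.univ a b
    have hcs' : ∑ i, a i * b i ≤ Real.sqrt (∑ i, a i ^ 2) * Real.sqrt (∑ i, b i ^ 2) := by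
      have h := Real.sqrt_le_sqrt hcs
      rwa [Real.sqrt_sq hC0, Real.sqrt_mul ha2] at h
    rw [hea, heb]
    constructor
    · exact sub_nonneg.2 hcs'
    · -- upper bound
      have hij : ∀ i j : Fin n, (a i * b j - a j * b i) ^ 2 ≤ (2 * (M * (K * w))) ^ 2 := by
        intro i j
        have habs : |a i * b j - a j * b i| ≤ 2 * (M * (K * w)) := by
          have e : a i * b j - a j * b i = a i * (b j - a j) - a j * (b i - a i) := by ring
          rw [e, sub_eq_add_neg]
          refine (abs_add_le _ _).trans ?_
          rw [abs_neg]
          refine le_trans (add_le_add (le_of_eq (abs_mul _ _)) (le_of_eq (abs_mul _ _))) ?_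
          have h1 : |a i| * |b j - a j| ≤ M * (K * w) :=
            mul_le_mul (hM i _ hsIcc) (hK j _ hsIcc _ htIcc) (abs_nonneg _) hM0
          have h2 : |a j| * |b i - a i| ≤ M * (K * w) :=
            mul_le_mul (hM j _ hsIcc) (hK i _ hsIcc _ htIcc) (abs_nonneg _) hM0
          linarith
        calc (a i * b j - a j * b i) ^ 2 = |a i * b j - a j * b i| ^ 2 := (sq_abs _).symm
        _ ≤ (2 * (M * (K * w))) ^ 2 := by
            exact pow_le_pow_left₀ (abs_nonneg _) habs 2
      have hsum2 : ∑ i, ∑ j, (a i * b j - a j * b i) ^ 2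
          ≤ (n:ℝ) * ((n:ℝ) * (2 * (M * (K * w))) ^ 2) := by
        calc ∑ i, ∑ j, (a i * b j - a j * b i) ^ 2
            ≤ ∑ _i : Fin n, ((n:ℝ) * (2 * (M * (K * w))) ^ 2) := by
              refine Finset.sum_le_sum fun i _ => ?_
              calc ∑ j, (a i * b j - a j * b i) ^ 2
                  ≤ ∑ _j : Fin n, (2 * (M * (K * w))) ^ 2 :=
                    Finset.sum_le_sum fun j _ => hij i j
              _ = (n:ℝ) * (2 * (M * (K * w))) ^ 2 := by
                  simp [Finset.sum_const, Finset.card_univ, nsmul_eq_mul]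
        _ = (n:ℝ) * ((n:ℝ) * (2 * (M * (K * w))) ^ 2) := by
            simp [Finset.sum_const, Finset.card_univ, nsmul_eq_mul]
      have hABC : (∑ i, a i ^ 2) * (∑ i, b i ^ 2) - (∑ i, a i * b i) ^ 2
          ≤ ((n:ℝ) * ((n:ℝ) * (2 * (M * (K * w))) ^ 2)) / 2 := by
        rw [lagrange a b]
        linarith
      -- factorization and conclusion
      have e1 : Real.sqrt (∑ i, a i ^ 2) * Real.sqrt (∑ i, a i ^ 2) = ∑ i, a i ^ 2 :=
        Real.mul_self_sqrt ha2
      have e2 : Real.sqrt (∑ i, b i ^ 2) * Real.sqrt (∑ i, b i ^ 2) = ∑ i, b i ^ 2 :=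
        Real.mul_self_sqrt hb2
      have hfac : (Real.sqrt (∑ i, a i ^ 2) * Real.sqrt (∑ i, b i ^ 2) - ∑ i, a i * b i)
          * (Real.sqrt (∑ i, a i ^ 2) * Real.sqrt (∑ i, b i ^ 2) + ∑ i, a i * b i)
          = (∑ i, a i ^ 2) * (∑ i, b i ^ 2) - (∑ i, a i * b i) ^ 2 := by
        have : (Real.sqrt (∑ i, a i ^ 2) * Real.sqrt (∑ i, b i ^ 2) - ∑ i, a i * b i)
            * (Real.sqrt (∑ i, a i ^ 2) * Real.sqrt (∑ i, b i ^ 2) + ∑ i, a i * b i)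
            = (Real.sqrt (∑ i, a i ^ 2) * Real.sqrt (∑ i, a i ^ 2))
              * (Real.sqrt (∑ i, b i ^ 2) * Real.sqrt (∑ i, b i ^ 2))
              - (∑ i, a i * b i) ^ 2 := by ring
        rw [this, e1, e2]
      have hge : c * c ≤ Real.sqrt (∑ i, a i ^ 2) * Real.sqrt (∑ i, b i ^ 2) := by
        have g1 := hA_lb p.1 hsIcc
        have g2 := hA_lb p.2 htIcc
        rw [hea] at g1
        rw [heb] at g2
        exact mul_le_mul g1 g2 hc_pos.le (Real.sqrt_nonneg _)
      set P := Real.sqrt (∑ i, a i ^ 2) * Real.sqrt (∑ i, b i ^ 2) - ∑ i, a i * b i with hPdef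
      have hP0 : 0 ≤ P := sub_nonneg.2 hcs'
      have hchain : P * (c * c) ≤ (n:ℝ) * ((n:ℝ) * (2 * (M * (K * w))) ^ 2) / 2 := by
        calc P * (c * c)
            ≤ P * (Real.sqrt (∑ i, a i ^ 2) * Real.sqrt (∑ i, b i ^ 2) + ∑ i, a i * b i) :=
              mul_le_mul_of_nonneg_left (by linarith) hP0
        _ = (∑ i, a i ^ 2) * (∑ i, b i ^ 2) - (∑ i, a i * b i) ^ 2 := hfac
        _ ≤ (n:ℝ) * ((n:ℝ) * (2 * (M * (K * w))) ^ 2) / 2 := hABC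
      rw [div_mul_eq_mul_div, le_div_iff₀ (mul_pos hc_pos hc_pos)]
      calc P * (c * c) ≤ (n:ℝ) * ((n:ℝ) * (2 * (M * (K * w))) ^ 2) / 2 := hchain
      _ = 2 * (n:ℝ) * (n:ℝ) * M ^ 2 * K ^ 2 * w ^ 2 := by ring
  -- squeeze: defect term over w^alpha tends to 0
  set Cb := 2 * (n:ℝ) * (n:ℝ) * M ^ 2 * K ^ 2 / (c * c) with hCbdef
  have hPz : Tendsto (fun p : ℝ × ℝ =>
      (Real.sqrt (∑ i, lam i ^ 2 * sig i p.1 ^ 2) * Real.sqrt (∑ i, lam i ^ 2 * sig i p.2 ^ 2)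
        - ∑ i, (lam i * sig i p.1) * (lam i * sig i p.2)) / |p.2 - p.1| ^ α) (lfil T) (𝓝 0) := by
    have hg : Tendsto (fun p : ℝ × ℝ => Cb * |p.2 - p.1| ^ ((2:ℝ) - α)) (lfil T) (𝓝 0) := by
      have h2α : Tendsto (fun x : ℝ => x ^ ((2:ℝ) - α)) (𝓝 0) (𝓝 ((0:ℝ) ^ ((2:ℝ) - α))) :=
        (Real.continuousAt_rpow_const 0 _ (Or.inr (by linarith))).tendsto
      rw [Real.zero_rpow (ne_of_gt (by linarith : (0:ℝ) < 2 - α))] at h2α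
      have := (h2α.comp hw).const_mul Cb
      simpa using this
    refine squeeze_zero' ?_ ?_ hg
    · filter_upwards [hev] with p hp
      have wpos : 0 < |p.2 - p.1| := abs_pos.2 (sub_ne_zero.2 (Ne.symm hp.2))
      exact div_nonneg (hPpt p hp).1 (Real.rpow_pos_of_pos wpos α).le
    · filter_upwards [hev] with p hp
      have wpos : 0 < |p.2 - p.1| := abs_pos.2 (sub_ne_zero.2 (Ne.symm hp.2))
      have hwα : 0 < |p.2 - p.1| ^ α := Real.rpow_pos_of_pos wpos α
      rw [div_le_iff₀ hwα]
      have he2 : (2:ℝ) - α + α = 2 := by ring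
      have hkey : Cb * |p.2 - p.1| ^ ((2:ℝ) - α) * |p.2 - p.1| ^ α = Cb * |p.2 - p.1| ^ 2 := by
        rw [mul_assoc, ← Real.rpow_add wpos, he2, Real.rpow_two]
      rw [hkey]
      exact (hPpt p hp).2
  -- assembly
  have hmain : Tendsto (fun p : ℝ × ℝ =>
      ((Real.sqrt (∑ i, lam i ^ 2 * sig i p.1 ^ 2) * Real.sqrt (∑ i, lam i ^ 2 * sig i p.2 ^ 2)
          - ∑ i, (lam i * sig i p.1) * (lam i * sig i p.2)) / |p.2 - p.1| ^ α
        + ∑ i, lam i ^ 2 * sig i p.1 * sig i p.2 * ((1 - r i p.1 p.2) / |p.2 - p.1| ^ alpha i)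
            * |p.2 - p.1| ^ (alpha i - α))
        / (Real.sqrt (∑ i, lam i ^ 2 * sig i p.1 ^ 2)
            * Real.sqrt (∑ i, lam i ^ 2 * sig i p.2 ^ 2)))
      (lfil T)
      (𝓝 ((0 + ∑ i, if alpha i = α then lam i ^ 2 * D i * sig i T ^ 2 else 0)
        / (∑ i, lam i ^ 2 * sig i T ^ 2))) :=
    (hPz.add hQ).div hden (ne_of_gt (hA_pos T hTmem))
  have hL : (0 + ∑ i, if alpha i = α then lam i ^ 2 * D i * sig i T ^ 2 else 0)
      / (∑ i, lam i ^ 2 * sig i T ^ 2)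
      = (∑ i ∈ Finset.univ.filter fun i => alpha i = α, lam i ^ 2 * D i * sig i T ^ 2)
        / (∑ i, lam i ^ 2 * sig i T ^ 2) := by
    rw [zero_add, Finset.sum_filter]
  rw [hL] at hmain
  have heq : (fun p : ℝ × ℝ =>
      ((Real.sqrt (∑ i, lam i ^ 2 * sig i p.1 ^ 2) * Real.sqrt (∑ i, lam i ^ 2 * sig i p.2 ^ 2)
          - ∑ i, (lam i * sig i p.1) * (lam i * sig i p.2)) / |p.2 - p.1| ^ α
        + ∑ i, lam i ^ 2 * sig i p.1 * sig i p.2 * ((1 - r i p.1 p.2) / |p.2 - p.1| ^ alpha i)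
            * |p.2 - p.1| ^ (alpha i - α))
        / (Real.sqrt (∑ i, lam i ^ 2 * sig i p.1 ^ 2)
            * Real.sqrt (∑ i, lam i ^ 2 * sig i p.2 ^ 2)))
      =ᶠ[lfil T] (fun p : ℝ × ℝ =>
        (1 - (∑ i, lam i ^ 2 * sig i p.1 * sig i p.2 * r i p.1 p.2) /
          (Real.sqrt (∑ i, lam i ^ 2 * sig i p.1 ^ 2)
            * Real.sqrt (∑ i, lam i ^ 2 * sig i p.2 ^ 2))) / |p.2 - p.1| ^ α) := by
    filter_upwards [hev] with p hp
    obtain ⟨⟨hp1, hp2⟩, hp3⟩ := hp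
    have hsIcc : p.1 ∈ Icc (0:ℝ) T := ⟨hp1.1.le, hp1.2⟩
    have htIcc : p.2 ∈ Icc (0:ℝ) T := ⟨hp2.1.le, hp2.2⟩
    have wpos : 0 < |p.2 - p.1| := abs_pos.2 (sub_ne_zero.2 (Ne.symm hp3))
    have hwα : 0 < |p.2 - p.1| ^ α := Real.rpow_pos_of_pos wpos α
    have hs1 : 0 < Real.sqrt (∑ i, lam i ^ 2 * sig i p.1 ^ 2) :=
      Real.sqrt_pos.2 (hA_pos p.1 hsIcc)
    have hs2 : 0 < Real.sqrt (∑ i, lam i ^ 2 * sig i p.2 ^ 2) :=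
      Real.sqrt_pos.2 (hA_pos p.2 htIcc)
    have hstep : ∀ i : Fin n,
        lam i ^ 2 * sig i p.1 * sig i p.2 * ((1 - r i p.1 p.2) / |p.2 - p.1| ^ alpha i)
          * |p.2 - p.1| ^ (alpha i - α)
        = lam i ^ 2 * sig i p.1 * sig i p.2 * (1 - r i p.1 p.2) / |p.2 - p.1| ^ α := by
      intro i
      have hwai : (0:ℝ) < |p.2 - p.1| ^ alpha i := Real.rpow_pos_of_pos wpos _
      rw [Real.rpow_sub wpos]
      field_simp
    rw [show (∑ i, lam i ^ 2 * sig i p.1 * sig i p.2 * ((1 - r i p.1 p.2) / |p.2 - p.1| ^ alpha i)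
          * |p.2 - p.1| ^ (alpha i - α))
        = ∑ i, lam i ^ 2 * sig i p.1 * sig i p.2 * (1 - r i p.1 p.2) / |p.2 - p.1| ^ α
        from Finset.sum_congr rfl fun i _ => hstep i]
    rw [← Finset.sum_div, ← add_div]
    have hnum : (Real.sqrt (∑ i, lam i ^ 2 * sig i p.1 ^ 2)
          * Real.sqrt (∑ i, lam i ^ 2 * sig i p.2 ^ 2)
          - ∑ i, (lam i * sig i p.1) * (lam i * sig i p.2))
        + ∑ i, lam i ^ 2 * sig i p.1 * sig i p.2 * (1 - r i p.1 p.2)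
        = Real.sqrt (∑ i, lam i ^ 2 * sig i p.1 ^ 2)
            * Real.sqrt (∑ i, lam i ^ 2 * sig i p.2 ^ 2)
          - ∑ i, lam i ^ 2 * sig i p.1 * sig i p.2 * r i p.1 p.2 := by
      have h' : ∑ i, lam i ^ 2 * sig i p.1 * sig i p.2 * (1 - r i p.1 p.2)
          = (∑ i, (lam i * sig i p.1) * (lam i * sig i p.2))
            - ∑ i, lam i ^ 2 * sig i p.1 * sig i p.2 * r i p.1 p.2 := by
        rw [← Finset.sum_sub_distrib]
        exact Finset.sum_congr rfl fun i _ => by ring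
      rw [h']; ring
    rw [hnum]
    rw [div_div]
    rw [eq_div_iff (ne_of_gt hwα)]
    field_simp
  exact (eps_iff T hT (fun p : ℝ × ℝ =>
      (1 - (∑ i, lam i ^ 2 * sig i p.1 * sig i p.2 * r i p.1 p.2) /
        (Real.sqrt (∑ i, lam i ^ 2 * sig i p.1 ^ 2)
          * Real.sqrt (∑ i, lam i ^ 2 * sig i p.2 ^ 2))) / |p.2 - p.1| ^ α)
    ((∑ i ∈ Finset.univ.filter fun i => alpha i = α, lam i ^ 2 * D i * sig i T ^ 2)
      / (∑ i, lam i ^ 2 * sig i T ^ 2))).mp (Tendsto.congr' heq hmain)
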